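/- For any m ≥ 1, almost surely the following holds for every α̊ ∈ A_n: V_n(α̊, β) = 0 for every β ∈ (ℝ^d)^m; consequently, for every β̊ ∈ (ℝ^d)^m, the pair (α̊, β̊) is a Nash equilibrium of the convolutional-discriminator game, i.e. V_n(α̊, β) ≤ V_n(α̊, β̊) ≤ V_n(α, β̊) for all α ∈ ℝ^d and all β ∈ (ℝ^d)^m. -/

import Mathlib

open MeasureTheory ProbabilityTheory Filter
open scoped Real

noncomputable section

/-- Discrete Fourier transform of `x : ℝ^d` at frequency `ω = 2πk/d`. -/
def dft (d : ℕ) (x : Fin d → ℝ) (k : Fin d) : ℂ :=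
  ∑ u : Fin d, (x u : ℂ) *
    Complex.exp (-(2 * Real.pi * Complex.I * ((k : ℕ) : ℂ) * ((u : ℕ) : ℂ)) / (d : ℂ))

/-- Circular convolution on `ℝ^d` (indices mod `d`). -/
def cconv (d : ℕ) (a z : Fin d → ℝ) : Fin d → ℝ := fun u => ∑ v : Fin d, a v * z (u - v)

/-- Covariance matrix of `a ⋆ Z`, `Z ~ N(0, I_d)` white noise. -/
def covMat (d : ℕ) (a : Fin d → ℝ) : Matrix (Fin d) (Fin d) ℝ :=
  Matrix.of fun u u' => ∑ v : Fin d, a (u - v) * a (u' - v)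

/-- Spectral (operator) norm of a matrix. -/
def specNorm (d : ℕ) (M : Matrix (Fin d) (Fin d) ℝ) : ℝ :=
  ‖Matrix.toEuclideanCLM (𝕜 := ℝ) M‖

/-- Euclidean norm. -/
def l2norm (d : ℕ) (x : Fin d → ℝ) : ℝ := Real.sqrt (∑ u : Fin d, x u ^ 2)

/-- Empirical covariance matrix of the first `n` samples. -/
def empCov (d n : ℕ) (y : ℕ → Fin d → ℝ) : Matrix (Fin d) (Fin d) ℝ :=
  (n : ℝ)⁻¹ • ∑ i ∈ Finset.range n, Matrix.vecMulVec (y i) (y i)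

/-- Empirical mean of `|ŷ(ω)|²` over the first `n` samples. -/
def empPS (d n : ℕ) (y : ℕ → Fin d → ℝ) (k : Fin d) : ℝ :=
  (n : ℝ)⁻¹ * ∑ i ∈ Finset.range n, Complex.normSq (dft d (y i) k)

/-- The consistent-generator set `A_n` (for a fixed sample `(z̄_i, z_i)_{i<n}`). -/
def An (d n : ℕ) (abar : Fin d → ℝ) (zbar z : ℕ → Fin d → ℝ) : Set (Fin d → ℝ) :=
  {a | ∀ k : Fin d, Complex.normSq (dft d a k) =
      empPS d n (fun i => cconv d abar (zbar i)) k / empPS d n z k}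


/-- The combined family of all Gaussian coordinates of the two sample sequences
`z̄` (at `false`) and `z` (at `true`). -/
def coords {Ω : Type*} (d : ℕ) (zbar z : ℕ → Ω → Fin d → ℝ) :
    Bool × ℕ × Fin d → Ω → ℝ :=
  fun p ω => if p.1 then z p.2.1 ω p.2.2 else zbar p.2.1 ω p.2.2

/-- `(z̄_i)` and `(z_i)` are mutually independent i.i.d. `N(0, I_d)` random vectors:
all the real coordinates are independent standard Gaussians. -/
def IsWhiteNoisePair {Ω : Type*} [MeasureSpace Ω] (d : ℕ)
    (zbar z : ℕ → Ω → Fin d → ℝ) : Prop :=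
  (∀ i, Measurable (zbar i)) ∧ (∀ i, Measurable (z i)) ∧
    iIndepFun (coords d zbar z) ℙ ∧
    ∀ p : Bool × ℕ × Fin d, Measure.map (coords d zbar z p) ℙ = gaussianReal 0 1

/-- `r_{n,ℓ}(α, β) = E_n(‖X ⋆ β_ℓ‖²) − E_n(‖(α ⋆ Z) ⋆ β_ℓ‖²)` for the convolutional
discriminator, given samples `x_i = xs i`, `z_i = zs i`. -/
def rConv (d n : ℕ) (xs zs : ℕ → Fin d → ℝ) (a : Fin d → ℝ) (bl : Fin d → ℝ) : ℝ :=
  (n : ℝ)⁻¹ * ∑ i ∈ Finset.range n, ∑ u : Fin d, cconv d (xs i) bl u ^ 2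
    - (n : ℝ)⁻¹ * ∑ i ∈ Finset.range n, ∑ u : Fin d, cconv d (cconv d a (zs i)) bl u ^ 2

/-- The convolutional-discriminator objective `V_n(α, β) = ∑_{ℓ<m} r_{n,ℓ}(α, β)²`. -/
def VConv (d n m : ℕ) (xs zs : ℕ → Fin d → ℝ) (a : Fin d → ℝ)
    (b : Fin m → Fin d → ℝ) : ℝ :=
  ∑ ℓ : Fin m, rConv d n xs zs a (b ℓ) ^ 2


section Aux

noncomputable def ww (d : ℕ) (m : ℤ) : ℂ := Complex.exp (-(2 * Real.pi * Complex.I * m) / d)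

lemma ww_add (d : ℕ) (m m' : ℤ) : ww d (m + m') = ww d m * ww d m' := by
  rw [ww, ww, ww, ← Complex.exp_add]; congr 1; push_cast; ring

lemma ww_dvd (d : ℕ) (hd : d ≠ 0) (m : ℤ) (h : (d:ℤ) ∣ m) : ww d m = 1 := by
  obtain ⟨q, rfl⟩ := h
  have hdc : (d:ℂ) ≠ 0 := Nat.cast_ne_zero.mpr hd
  have : (-(2 * Real.pi * Complex.I * ((d:ℤ)*q : ℤ)) / d : ℂ)
      = (-q : ℤ) * (2 * Real.pi * Complex.I) := by
    push_cast; field_simp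
  rw [ww, this, Complex.exp_int_mul, Complex.exp_two_pi_mul_I, one_zpow]

lemma ww_eq_one_iff (d : ℕ) (hd : d ≠ 0) (m : ℤ) : ww d m = 1 ↔ (d:ℤ) ∣ m := by
  constructor
  · intro h
    rw [ww, Complex.exp_eq_one_iff] at h
    obtain ⟨n, hn⟩ := h
    have hdc : (d:ℂ) ≠ 0 := Nat.cast_ne_zero.mpr hd
    have hπ : (Real.pi : ℂ) ≠ 0 := Complex.ofReal_ne_zero.mpr Real.pi_ne_zero
    have h2 : (2:ℂ) * Real.pi * Complex.I ≠ 0 := by simp [hπ, Complex.I_ne_zero]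
    field_simp at hn
    have h3 : (2 * (Real.pi:ℂ) * Complex.I) * (m:ℂ)
        = (2 * (Real.pi:ℂ) * Complex.I) * ((-n*d : ℤ):ℂ) := by
      push_cast; linear_combination (-(2 * (Real.pi:ℂ) * Complex.I)) * hn
    have h4 := mul_left_cancel₀ h2 h3
    have h5 : m = -n*d := by exact_mod_cast h4
    exact ⟨-n, by rw [h5]; ring⟩
  · exact ww_dvd d hd m

lemma ww_pow (d : ℕ) (k : ℕ) (m : ℤ) : ww d (k * m) = (ww d m) ^ k := by
  rw [ww, ww, ← Complex.exp_nat_mul]; congr 1; push_cast; ring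

lemma sum_ww (d : ℕ) (hd : d ≠ 0) (m : ℤ) :
    ∑ k ∈ Finset.range d, ww d (k * m) = if (d:ℤ) ∣ m then (d:ℂ) else 0 := by
  simp only [ww_pow]
  by_cases h : (d:ℤ) ∣ m
  · simp [ww_dvd d hd m h, h]
  · rw [if_neg h]
    have hne : ww d m ≠ 1 := fun hc => h ((ww_eq_one_iff d hd m).mp hc)
    rw [geom_sum_eq hne]
    have : ww d m ^ d = 1 := by
      rw [← ww_pow]; exact ww_dvd d hd _ ⟨m, by ring⟩
    simp [this]

lemma ww_congr (d : ℕ) (hd : d ≠ 0) (m m' : ℤ) (h : (d:ℤ) ∣ (m - m')) : ww d m = ww d m' := by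
  have : m = (m - m') + m' := by ring
  rw [this, ww_add, ww_dvd d hd _ h, one_mul]

lemma dft_eq (d : ℕ) (x : Fin d → ℝ) (k : Fin d) :
    dft d x k = ∑ u : Fin d, (x u : ℂ) * ww d ((k:ℕ) * (u:ℕ)) := by
  refine Finset.sum_congr rfl fun u _ => ?_
  rw [ww]; congr 2; push_cast; ring

lemma dft_cconv (d : ℕ) (hd : d ≠ 0) (a z : Fin d → ℝ) (k : Fin d) :
    dft d (cconv d a z) k = dft d a k * dft d z k := by
  haveI : NeZero d := ⟨hd⟩
  simp only [dft_eq, cconv]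
  push_cast
  simp only [Finset.sum_mul]
  rw [Finset.sum_comm]
  refine Finset.sum_congr rfl fun v _ => ?_
  rw [Finset.mul_sum, ← Equiv.sum_comp (Equiv.addRight v)
    (fun u => ((a v : ℂ) * (z (u - v) : ℂ)) * ww d ((k:ℕ) * ((u:ℕ):ℤ)))]
  refine Finset.sum_congr rfl fun t _ => ?_
  simp only [Equiv.coe_addRight, add_sub_cancel_right]
  have hval : (((t + v : Fin d) : ℕ) : ℤ) = (((t:ℕ) + (v:ℕ)) % (d:ℤ)) := by
    rw [Fin.val_add, Int.natCast_mod]; push_cast; ring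
  have hcongr : ww d ((k:ℕ) * (((t+v : Fin d) :ℕ):ℤ)) = ww d ((k:ℕ) * ((t:ℕ) + (v:ℕ))) := by
    apply ww_congr d hd
    rw [hval]
    rw [Int.emod_def]
    ring_nf
    exact ⟨-((k:ℕ) * (((t:ℕ) + (v:ℕ)) / d)), by ring⟩
  rw [hcongr]
  have : ((k:ℕ) * ((t:ℕ) + (v:ℕ)) : ℤ) = (k:ℕ)*(t:ℕ) + (k:ℕ)*(v:ℕ) := by ring
  rw [this, ww_add]
  ring

lemma conj_ww (d : ℕ) (m : ℤ) : (starRingEnd ℂ) (ww d m) = ww d (-m) := by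
  rw [ww, ww, ← Complex.exp_conj]
  congr 1
  simp [map_div₀, Complex.conj_I, map_ofNat]

lemma parseval (d : ℕ) (hd : d ≠ 0) (x : Fin d → ℝ) :
    ∑ k : Fin d, Complex.normSq (dft d x k) = d * ∑ u : Fin d, (x u)^2 := by
  have key : ∑ k : Fin d, (Complex.normSq (dft d x k) : ℂ)
      = (d:ℂ) * ∑ u : Fin d, ((x u : ℂ))^2 := by
    have conj_dft : ∀ k : Fin d, (starRingEnd ℂ) (dft d x k)
        = ∑ v : Fin d, (x v : ℂ) * ww d (-((k:ℕ) * (v:ℕ))) := by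
      intro k
      rw [dft_eq, map_sum]
      exact Finset.sum_congr rfl fun v _ => by rw [map_mul, Complex.conj_ofReal, conj_ww]
    calc ∑ k : Fin d, (Complex.normSq (dft d x k) : ℂ)
        = ∑ k : Fin d, dft d x k * (starRingEnd ℂ) (dft d x k) := by
          exact Finset.sum_congr rfl fun k _ => (Complex.mul_conj _).symm
      _ = ∑ k : Fin d, ∑ u : Fin d, ∑ v : Fin d,
            ((x u : ℂ) * (x v : ℂ)) * ww d ((k:ℕ) * ((u:ℕ) - (v:ℕ))) := by
          refine Finset.sum_congr rfl fun k _ => ?_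
          rw [conj_dft k, dft_eq, Finset.sum_mul_sum]
          refine Finset.sum_congr rfl fun u _ => Finset.sum_congr rfl fun v _ => ?_
          have : ww d ((k:ℕ)*(u:ℕ)) * ww d (-((k:ℕ)*(v:ℕ)))
              = ww d ((k:ℕ) * ((u:ℕ) - (v:ℕ))) := by
            rw [← ww_add]; congr 1; ring
          rw [← this]; ring
      _ = ∑ u : Fin d, ∑ v : Fin d,
            ((x u : ℂ) * (x v : ℂ)) * ∑ k ∈ Finset.range d, ww d ((k:ℕ) * ((u:ℕ) - (v:ℕ))) := by
          rw [Finset.sum_comm]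
          refine Finset.sum_congr rfl fun u _ => ?_
          rw [Finset.sum_comm]
          refine Finset.sum_congr rfl fun v _ => ?_
          rw [Finset.mul_sum, Fin.sum_univ_eq_sum_range
            (fun k : ℕ => ((x u : ℂ) * (x v : ℂ)) * ww d ((k:ℤ) * ((u:ℕ) - (v:ℕ))))]
      _ = ∑ u : Fin d, ∑ v : Fin d,
            ((x u : ℂ) * (x v : ℂ)) * (if u = v then (d:ℂ) else 0) := by
          refine Finset.sum_congr rfl fun u _ => Finset.sum_congr rfl fun v _ => ?_
          rw [sum_ww d hd]
          congr 1
          have hu := u.isLt; have hv := v.isLt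
          by_cases h : u = v
          · simp [h]
          · rw [if_neg h, if_neg]
            intro hdvd
            have h0 : ((u:ℕ):ℤ) - ((v:ℕ):ℤ) = 0 := Int.eq_zero_of_abs_lt_dvd hdvd (by
              rw [abs_lt]; omega)
            exact h (Fin.ext (by omega))
      _ = (d:ℂ) * ∑ u : Fin d, ((x u : ℂ))^2 := by
          rw [Finset.mul_sum]
          refine Finset.sum_congr rfl fun u _ => ?_
          simp only [mul_ite, mul_zero, Finset.sum_ite_eq, Finset.mem_univ, if_true]
          ring
  have := congrArg Complex.re key
  simpa [← Complex.ofReal_pow] using this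

lemma parseval_cconv (d : ℕ) (hd : d ≠ 0) (x b : Fin d → ℝ) :
    (d:ℝ) * ∑ u : Fin d, cconv d x b u ^ 2
      = ∑ k : Fin d, Complex.normSq (dft d x k) * Complex.normSq (dft d b k) := by
  rw [← parseval d hd (cconv d x b)]
  exact Finset.sum_congr rfl fun k _ => by rw [dft_cconv d hd, Complex.normSq_mul]

lemma rconv_eq (d n : ℕ) (hd : d ≠ 0) (xs zs : ℕ → Fin d → ℝ) (a bl : Fin d → ℝ) :
    (d:ℝ) * rConv d n xs zs a bl
      = ∑ k : Fin d, Complex.normSq (dft d bl k) *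
          (empPS d n xs k - Complex.normSq (dft d a k) * empPS d n zs k) := by
  have hA : ∀ i : ℕ, (d:ℝ) * ∑ u : Fin d, cconv d (xs i) bl u ^ 2
      = ∑ k : Fin d, Complex.normSq (dft d (xs i) k) * Complex.normSq (dft d bl k) :=
    fun i => parseval_cconv d hd (xs i) bl
  have hB : ∀ i : ℕ, (d:ℝ) * ∑ u : Fin d, cconv d (cconv d a (zs i)) bl u ^ 2
      = ∑ k : Fin d, Complex.normSq (dft d a k) * Complex.normSq (dft d (zs i) k)
          * Complex.normSq (dft d bl k) := by
    intro i
    rw [parseval_cconv d hd (cconv d a (zs i)) bl]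
    exact Finset.sum_congr rfl fun k _ => by rw [dft_cconv d hd, Complex.normSq_mul]
  calc (d:ℝ) * rConv d n xs zs a bl
      = (n:ℝ)⁻¹ * ∑ i ∈ Finset.range n, ((d:ℝ) * ∑ u : Fin d, cconv d (xs i) bl u ^ 2)
        - (n:ℝ)⁻¹ * ∑ i ∈ Finset.range n,
            ((d:ℝ) * ∑ u : Fin d, cconv d (cconv d a (zs i)) bl u ^ 2) := by
        rw [rConv]; simp only [← Finset.mul_sum]; ring
    _ = (n:ℝ)⁻¹ * ∑ i ∈ Finset.range n, ∑ k : Fin d,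
            Complex.normSq (dft d (xs i) k) * Complex.normSq (dft d bl k)
        - (n:ℝ)⁻¹ * ∑ i ∈ Finset.range n, ∑ k : Fin d,
            Complex.normSq (dft d a k) * Complex.normSq (dft d (zs i) k)
              * Complex.normSq (dft d bl k) := by
        rw [Finset.sum_congr rfl (fun i _ => hA i), Finset.sum_congr rfl (fun i _ => hB i)]
    _ = ∑ k : Fin d, Complex.normSq (dft d bl k) *
          (empPS d n xs k - Complex.normSq (dft d a k) * empPS d n zs k) := by
        rw [Finset.sum_comm, Finset.sum_comm
          (f := fun i (k : Fin d) => Complex.normSq (dft d a k)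
            * Complex.normSq (dft d (zs i) k) * Complex.normSq (dft d bl k))]
        rw [Finset.mul_sum, Finset.mul_sum, ← Finset.sum_sub_distrib]
        refine Finset.sum_congr rfl fun k _ => ?_
        have e1 : ∑ i ∈ Finset.range n, Complex.normSq (dft d (xs i) k)
              * Complex.normSq (dft d bl k)
            = (∑ i ∈ Finset.range n, Complex.normSq (dft d (xs i) k))
              * Complex.normSq (dft d bl k) := by rw [Finset.sum_mul]
        have e2 : ∑ i ∈ Finset.range n, Complex.normSq (dft d a k)
              * Complex.normSq (dft d (zs i) k) * Complex.normSq (dft d bl k)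
            = (∑ i ∈ Finset.range n, Complex.normSq (dft d (zs i) k))
              * (Complex.normSq (dft d a k) * Complex.normSq (dft d bl k)) := by
          rw [Finset.sum_mul]
          exact Finset.sum_congr rfl fun i _ => by ring
        rw [e1, e2, empPS, empPS]
        ring
  -- end calc

lemma rconv_zero (d n : ℕ) (hd : d ≠ 0) (xs zs : ℕ → Fin d → ℝ) (a bl : Fin d → ℝ)
    (hmem : ∀ k : Fin d, Complex.normSq (dft d a k) * empPS d n zs k = empPS d n xs k) :
    rConv d n xs zs a bl = 0 := by
  have h := rconv_eq d n hd xs zs a bl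
  have h2 : ∑ k : Fin d, Complex.normSq (dft d bl k) *
      (empPS d n xs k - Complex.normSq (dft d a k) * empPS d n zs k) = 0 := by
    refine Finset.sum_eq_zero fun k _ => ?_
    rw [hmem k]; ring
  rw [h2] at h
  have hd' : (d:ℝ) ≠ 0 := Nat.cast_ne_zero.mpr hd
  exact (mul_eq_zero.mp h).resolve_left hd'

lemma prob_key {Ω : Type*} [MeasureSpace Ω] [IsProbabilityMeasure (ℙ : Measure Ω)]
    {d : ℕ} (hd : 1 ≤ d) (zbar z : ℕ → Ω → Fin d → ℝ)
    (hwn : IsWhiteNoisePair d zbar z) (c : Fin d → ℝ)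
    (hc : c ⟨0, hd⟩ = 1) :
    ℙ {ω | ∑ u : Fin d, c u * z 0 ω u = 0} = 0 := by
  classical
  obtain ⟨hm1, hm2, hindep, hmap⟩ := hwn
  set F := coords d zbar z with hF
  have hFmeas : ∀ p, Measurable (F p) := by
    rintro ⟨b, i, u⟩
    cases b
    · exact (measurable_pi_apply u).comp (hm1 i)
    · exact (measurable_pi_apply u).comp (hm2 i)
  set z0 : Fin d := ⟨0, hd⟩ with hz0
  set X : Ω → ℝ := F (true, 0, z0) with hX
  set Y : Ω → ℝ := fun ω => ∑ u ∈ Finset.univ.erase z0, c u * F (true, 0, u) ω with hY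
  have hXmeas : Measurable X := hFmeas _
  have hYmeas : Measurable Y :=
    Finset.measurable_sum _ fun u _ => ((hFmeas (true, 0, u)).const_mul _)
  have hXY : IndepFun X Y ℙ := by
    set S : Finset (Bool × ℕ × Fin d) := {(true, 0, z0)} with hS
    set T : Finset (Bool × ℕ × Fin d) :=
      (Finset.univ.erase z0).image (fun u => (true, 0, u)) with hT
    have hST : Disjoint S T := by
      simp only [hS, Finset.disjoint_singleton_left, hT, Finset.mem_image]
      rintro ⟨u, hu, hu2⟩
      rw [Prod.ext_iff, Prod.ext_iff] at hu2
      exact (Finset.mem_erase.mp hu).1 hu2.2.2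
    have h0 := hindep.indepFun_finset S T hST hFmeas
    have hg1 : Measurable
        (fun v : (i : S) → ℝ => v ⟨(true, 0, z0), Finset.mem_singleton_self _⟩) :=
      measurable_pi_apply _
    have hg2 : Measurable (fun v : (i : T) → ℝ => ∑ i ∈ T.attach, c i.1.2.2 * v i) :=
      Finset.measurable_sum _ fun i _ => (measurable_pi_apply i).const_mul _
    have h1 := h0.comp hg1 hg2
    have he1 : ((fun v : (i : S) → ℝ => v ⟨(true, 0, z0), Finset.mem_singleton_self _⟩) ∘
        (fun a (i : S) => F i a)) = X := rfl
    have he2 : ((fun v : (i : T) → ℝ => ∑ i ∈ T.attach, c i.1.2.2 * v i) ∘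
        (fun a (i : T) => F i a)) = Y := by
      funext a
      show ∑ i ∈ T.attach, c i.1.2.2 * F i.1 a = Y a
      rw [Finset.sum_attach T (fun p => c p.2.2 * F p a)]
      rw [hT, Finset.sum_image (by intro x _ y _ h; simpa [Prod.ext_iff] using h)]
    rwa [he1, he2] at h1
  have hs : MeasurableSet {p : ℝ × ℝ | p.2 + p.1 = 0} :=
    (measurable_snd.add measurable_fst) (measurableSet_singleton 0)
  have hmapX : Measure.map X ℙ = gaussianReal 0 1 := hmap (true, 0, z0)
  have hkey : ℙ {ω | X ω + Y ω = 0} = 0 := by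
    have h1 : ℙ {ω | X ω + Y ω = 0}
        = Measure.map (fun ω => (Y ω, X ω)) ℙ {p : ℝ × ℝ | p.2 + p.1 = 0} := by
      rw [Measure.map_apply (hYmeas.prodMk hXmeas) hs]
      rfl
    rw [h1, (indepFun_iff_map_prod_eq_prod_map_map hYmeas.aemeasurable
        hXmeas.aemeasurable).mp hXY.symm, Measure.prod_apply hs]
    have : ∀ y : ℝ, (Measure.map X ℙ) (Prod.mk y ⁻¹' {p : ℝ × ℝ | p.2 + p.1 = 0}) = 0 := by
      intro y
      have hset : (Prod.mk y ⁻¹' {p : ℝ × ℝ | p.2 + p.1 = 0}) = {-y} := by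
        ext x; simp [Set.mem_preimage]; constructor <;> intro h <;> linarith
      rw [hset, hmapX]
      exact (gaussianReal_absolutelyContinuous 0 one_ne_zero) (measure_singleton _)
    simp only [this, lintegral_zero]
  have hsets : {ω | ∑ u : Fin d, c u * z 0 ω u = 0} = {ω | X ω + Y ω = 0} := by
    ext ω
    have : ∑ u : Fin d, c u * z 0 ω u = X ω + Y ω := by
      have h0 : ∀ u, z 0 ω u = F (true, 0, u) ω := fun u => rfl
      simp only [h0]
      rw [← Finset.add_sum_erase _ (fun u => c u * F (true, 0, u) ω) (Finset.mem_univ z0),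
        hc, one_mul]
    simp [this]
  rw [hsets]; exact hkey

end Aux

theorem stmt13 {d n m : ℕ} (hd : 1 ≤ d) (hn : 1 ≤ n) (hm : 1 ≤ m)
    {Ω : Type*} [MeasureSpace Ω] [IsProbabilityMeasure (ℙ : Measure Ω)]
    (abar : Fin d → ℝ) (zbar z : ℕ → Ω → Fin d → ℝ) (hwn : IsWhiteNoisePair d zbar z) :
    ∀ᵐ ω ∂ℙ, ∀ a₀ ∈ An d n abar (fun i => zbar i ω) (fun i => z i ω),
      (∀ b : Fin m → Fin d → ℝ,
        VConv d n m (fun i => cconv d abar (zbar i ω)) (fun i => z i ω) a₀ b = 0) ∧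
      ∀ b₀ : Fin m → Fin d → ℝ,
        (∀ b : Fin m → Fin d → ℝ,
          VConv d n m (fun i => cconv d abar (zbar i ω)) (fun i => z i ω) a₀ b ≤
            VConv d n m (fun i => cconv d abar (zbar i ω)) (fun i => z i ω) a₀ b₀) ∧
        (∀ a : Fin d → ℝ,
          VConv d n m (fun i => cconv d abar (zbar i ω)) (fun i => z i ω) a₀ b₀ ≤
            VConv d n m (fun i => cconv d abar (zbar i ω)) (fun i => z i ω) a b₀) := by
  haveI : NeZero d := ⟨by omega⟩
  have hae : ∀ᵐ ω ∂ℙ, ∀ k : Fin d, (dft d (fun u => z 0 ω u) k).re ≠ 0 := by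
    rw [ae_all_iff]
    intro k
    set c : Fin d → ℝ := fun u => (Complex.exp
      (-(2 * Real.pi * Complex.I * ((k:ℕ):ℂ) * ((u:ℕ):ℂ)) / (d:ℂ))).re with hcdef
    have hc : c ⟨0, hd⟩ = 1 := by simp [hcdef]
    have h0 := prob_key hd zbar z hwn c hc
    have hre : ∀ (x : Fin d → ℝ), (dft d x k).re = ∑ u : Fin d, c u * x u := by
      intro x
      rw [dft, Complex.re_sum]
      refine Finset.sum_congr rfl fun u _ => ?_
      rw [hcdef, Complex.re_ofReal_mul, mul_comm]
    have hsets : {ω : Ω | ¬ (dft d (fun u => z 0 ω u) k).re ≠ 0}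
        = {ω : Ω | ∑ u : Fin d, c u * z 0 ω u = 0} := by
      ext ω; simp [hre, not_not]
    rw [ae_iff, hsets]
    exact h0
  filter_upwards [hae] with ω hω
  have hz : ∀ k : Fin d, empPS d n (fun i => z i ω) k ≠ 0 := by
    intro k
    have hpos : 0 < Complex.normSq (dft d (fun u => z 0 ω u) k) := by
      rw [Complex.normSq_pos]
      intro hzero
      exact hω k (by rw [hzero]; simp)
    have hsum : Complex.normSq (dft d (fun u => z 0 ω u) k)
        ≤ ∑ i ∈ Finset.range n, Complex.normSq (dft d (z i ω) k) :=
      Finset.single_le_sum (f := fun i => Complex.normSq (dft d (z i ω) k))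
        (fun i _ => Complex.normSq_nonneg _) (Finset.mem_range.mpr hn)
    have hlt : 0 < empPS d n (fun i => z i ω) k := by
      rw [empPS]
      exact mul_pos (inv_pos.mpr (by exact_mod_cast hn)) (lt_of_lt_of_le hpos hsum)
    exact ne_of_gt hlt
  intro a₀ ha₀
  have hmem : ∀ k : Fin d, Complex.normSq (dft d a₀ k) * empPS d n (fun i => z i ω) k
      = empPS d n (fun i => cconv d abar (zbar i ω)) k := by
    intro k
    rw [ha₀ k, div_mul_cancel₀ _ (hz k)]
  have hr : ∀ bl : Fin d → ℝ,
      rConv d n (fun i => cconv d abar (zbar i ω)) (fun i => z i ω) a₀ bl = 0 :=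
    fun bl => rconv_zero d n (by omega) _ _ a₀ bl hmem
  have hV0 : ∀ b : Fin m → Fin d → ℝ,
      VConv d n m (fun i => cconv d abar (zbar i ω)) (fun i => z i ω) a₀ b = 0 := by
    intro b
    rw [VConv]
    exact Finset.sum_eq_zero fun ℓ _ => by rw [hr (b ℓ)]; ring
  refine ⟨hV0, fun b₀ => ⟨fun b => by rw [hV0 b, hV0 b₀], fun a => ?_⟩⟩
  rw [hV0 b₀]
  exact Finset.sum_nonneg fun ℓ _ => sq_nonneg _
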